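/- Let H be a d-lightweight initialization of the subdivided graph G′, let s,t be vertices of G, let π(s,t) be the fixed shortest s–t path in G′, let z be the total weight of the edges of π(s,t) that are absent from H, and let ε′ ∈ (0,1]. Then there exists a set N of at least ε′·z/10 vertices of G′ such that every vertex of N is at distance at most ε′·W(s,t) in H from some vertex of π(s,t). -/

import Mathlib

open scoped ENNReal Classical

/-- The total weight of a walk: the sum of the weights of its edges. -/
noncomputable def walkWeight {V : Type} (G : SimpleGraph V) (w : Sym2 V → ℝ≥0∞)
    {s t : V} (p : G.Walk s t) : ℝ≥0∞ :=
  (p.edges.map w).sum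

/-- Shortest-path distance in the weighted graph `(G, w)`, equal to `⊤` if there is no path. -/
noncomputable def gdist {V : Type} (G : SimpleGraph V) (w : Sym2 V → ℝ≥0∞)
    (s t : V) : ℝ≥0∞ :=
  ⨅ p : G.Walk s t, walkWeight G w p

/-- The maximum edge weight along a walk (0 for the trivial walk). -/
noncomputable def maxEdge {V : Type} (G : SimpleGraph V) (w : Sym2 V → ℝ≥0∞)
    {s t : V} (p : G.Walk s t) : ℝ≥0∞ :=
  (p.edges.map w).foldr max 0

section auxlist

noncomputable def maxEdge' (l : List ℝ≥0∞) : ℝ≥0∞ := l.foldr max 0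

lemma le_maxEdge' {l : List ℝ≥0∞} {x : ℝ≥0∞} (hx : x ∈ l) : x ≤ maxEdge' l := by
  induction l with
  | nil => simp at hx
  | cons a l ih =>
    rcases List.mem_cons.mp hx with rfl | hx
    · exact le_max_left _ _
    · exact le_trans (ih hx) (le_max_right _ _)

lemma maxEdge'_lt {l : List ℝ≥0∞} {c : ℝ≥0∞} (hc : 0 < c) (h : ∀ x ∈ l, x < c) :
    maxEdge' l < c := by
  induction l with
  | nil => simpa [maxEdge'] using hc
  | cons a l ih =>
    have := ih (fun x hx => h x (List.mem_cons_of_mem _ hx))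
    exact max_lt (h a List.mem_cons_self) this

lemma sum_map_filter_le {α : Type*} (w : α → ℝ≥0∞) (q : α → Bool) (l : List α) :
    ((l.filter q).map w).sum ≤ (l.map w).sum := by
  induction l with
  | nil => simp
  | cons a l ih =>
    by_cases hqa : q a
    · simp only [List.filter_cons, hqa, if_pos, List.map_cons, List.sum_cons]
      exact add_le_add_right ih _
    · simp only [List.filter_cons, hqa, Bool.false_eq_true, if_neg, not_false_iff,
        List.map_cons, List.sum_cons]
      exact ih.trans le_add_self

lemma list_sum_ne_top {l : List ℝ≥0∞} (h : ∀ x ∈ l, x ≠ ⊤) : l.sum ≠ ⊤ := by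
  induction l with
  | nil => simp
  | cons a l ih =>
    simp only [List.sum_cons]
    exact ENNReal.add_ne_top.mpr ⟨h a List.mem_cons_self,
      ih (fun x hx => h x (List.mem_cons_of_mem _ hx))⟩

end auxlist

section auxgdist
variable {V : Type} {G : SimpleGraph V} {w : Sym2 V → ℝ≥0∞}

lemma gdist_le {s t : V} (p : G.Walk s t) : gdist G w s t ≤ walkWeight G w p :=
  iInf_le _ p

lemma walkWeight_nil {s : V} : walkWeight G w (SimpleGraph.Walk.nil : G.Walk s s) = 0 := by
  simp [walkWeight]

lemma gdist_self (u : V) : gdist G w u u = 0 :=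
  le_antisymm (by simpa [walkWeight_nil] using gdist_le (SimpleGraph.Walk.nil : G.Walk u u))
    bot_le

lemma walkWeight_append {s u t : V} (p : G.Walk s u) (q : G.Walk u t) :
    walkWeight G w (p.append q) = walkWeight G w p + walkWeight G w q := by
  simp [walkWeight]

lemma gdist_triangle (u x v : V) : gdist G w u v ≤ gdist G w u x + gdist G w x v := by
  conv_rhs => rw [gdist, gdist, ENNReal.iInf_add]
  refine le_iInf fun p => ?_
  rw [ENNReal.add_iInf]
  refine le_iInf fun q => ?_
  exact le_trans (gdist_le (p.append q)) (walkWeight_append p q).le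

lemma gdist_comm (u v : V) : gdist G w u v = gdist G w v u := by
  have key : ∀ a b : V, gdist G w a b ≤ gdist G w b a := by
    intro a b
    refine le_iInf fun q => ?_
    refine le_trans (gdist_le q.reverse) ?_
    simp [walkWeight, List.sum_reverse]
  exact le_antisymm (key u v) (key v u)

lemma gdist_mono {G₁ G₂ : SimpleGraph V} (h : G₁ ≤ G₂) (u v : V) :
    gdist G₂ w u v ≤ gdist G₁ w u v := by
  refine le_iInf fun p => ?_
  have he : ∀ e ∈ p.edges, e ∈ G₂.edgeSet :=
    fun e hh => SimpleGraph.edgeSet_mono h (p.edges_subset_edgeSet hh)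
  refine le_trans (gdist_le (p.transfer G₂ he)) ?_
  simp [walkWeight, SimpleGraph.Walk.edges_transfer]

lemma getVert_mem_support {s t : V} (p : G.Walk s t) (i : ℕ) :
    p.getVert i ∈ p.support := by
  by_cases hi : i ≤ p.length
  · exact SimpleGraph.Walk.mem_support_iff_exists_getVert.mpr ⟨i, rfl, hi⟩
  · rw [p.getVert_of_length_le (le_of_not_ge hi)]
    exact p.end_mem_support

lemma gdist_getVert_le_prefix {s t : V} (p : G.Walk s t) (i : ℕ) :
    gdist G w s (p.getVert i) ≤ ((p.edges.map w).take i).sum := by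
  induction p generalizing i with
  | nil => simpa using (gdist_self _).le
  | @cons a b c h q ih =>
    cases i with
    | zero => simpa using (gdist_self _).le
    | succ i =>
      rw [SimpleGraph.Walk.getVert_cons_succ]
      refine le_trans (gdist_triangle a b _) ?_
      simp only [SimpleGraph.Walk.edges_cons, List.map_cons, List.take_succ_cons,
        List.sum_cons]
      gcongr
      · exact le_trans (gdist_le (SimpleGraph.Walk.cons h .nil)) (by simp [walkWeight])
      · exact ih i

lemma gdist_getVert_le_suffix {s t : V} (p : G.Walk s t) (i : ℕ) :
    gdist G w (p.getVert i) t ≤ ((p.edges.map w).drop i).sum := by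
  induction p generalizing i with
  | nil => simpa using (gdist_self _).le
  | cons h q ih =>
    cases i with
    | zero =>
      simpa [walkWeight] using gdist_le (SimpleGraph.Walk.cons h q)
    | succ i =>
      rw [SimpleGraph.Walk.getVert_cons_succ]
      simpa using ih i

lemma gdist_getVert_le_nat {s t : V} (p : G.Walk s t)
    (h1 : ∀ e ∈ p.edges, w e ≤ 1) (i : ℕ) :
    gdist G w s (p.getVert i) ≤ (i : ℝ≥0∞) := by
  induction p generalizing i with
  | nil => exact le_trans (gdist_self _).le zero_le
  | @cons a b c h q ih =>
    cases i with
    | zero => exact le_trans (gdist_self _).le zero_le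
    | succ i =>
      rw [SimpleGraph.Walk.getVert_cons_succ]
      refine le_trans (gdist_triangle a b _) ?_
      push_cast
      rw [add_comm (i:ℝ≥0∞) 1]
      gcongr
      · refine le_trans (gdist_le (SimpleGraph.Walk.cons h .nil)) ?_
        simpa [walkWeight] using h1 _ (by simp)
      · exact ih (fun e he => h1 e (by simp [he])) i

lemma support_getElem_eq_getVert {s t : V} (p : G.Walk s t) (i : ℕ)
    (hi : i < p.support.length) : p.support[i] = p.getVert i := by
  induction p generalizing i with
  | nil =>
    simp only [SimpleGraph.Walk.support_nil, List.length_singleton] at hi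
    have : i = 0 := by omega
    subst this; simp
  | cons h q ih =>
    cases i with
    | zero => simp
    | succ i =>
      rw [SimpleGraph.Walk.getVert_cons_succ]
      simp only [SimpleGraph.Walk.support_cons, List.getElem_cons_succ]
      exact ih i (by simp only [SimpleGraph.Walk.support_cons, List.length_cons,
        SimpleGraph.Walk.length_support] at hi ⊢; omega)

lemma getVert_injOn_of_isPath {s t : V} {p : G.Walk s t} (hp : p.IsPath)
    {i j : ℕ} (hi : i ≤ p.length) (hj : j ≤ p.length) (h : p.getVert i = p.getVert j) :
    i = j := by
  have hi' : i < p.support.length := by rw [SimpleGraph.Walk.length_support]; omega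
  have hj' : j < p.support.length := by rw [SimpleGraph.Walk.length_support]; omega
  have := hp.support_nodup
  rw [← support_getElem_eq_getVert p i hi', ← support_getElem_eq_getVert p j hj'] at h
  exact (List.Nodup.getElem_inj_iff this).mp h

end auxgdist

lemma ball_card_ge {V : Type} [Fintype V] {T : SimpleGraph V} {w : Sym2 V → ℝ≥0∞}
    (hconn : T.Connected) (h1 : ∀ e ∈ T.edgeSet, w e ≤ 1)
    (u : V) (ρ : ℝ≥0∞) (hρ0 : 0 < ρ) (hρn : ρ ≤ (Fintype.card V : ℝ≥0∞)) :
    ρ ≤ ((Finset.univ.filter (fun x => gdist T w u x ≤ ρ)).card : ℝ≥0∞) := by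
  have hρtop : ρ ≠ ⊤ := (lt_of_le_of_lt hρn (ENNReal.natCast_lt_top _)).ne
  have hρR : 0 < ρ.toReal := ENNReal.toReal_pos hρ0.ne' hρtop
  set j : ℕ := ⌈ρ.toReal⌉₊ with hjdef
  have hj1 : 1 ≤ j := Nat.one_le_iff_ne_zero.mpr (by positivity)
  have hjρ : ρ ≤ (j : ℝ≥0∞) := by
    rw [← ENNReal.ofReal_toReal hρtop, ← ENNReal.ofReal_natCast]
    exact ENNReal.ofReal_le_ofReal (Nat.le_ceil _)
  have hj1ρR : ((j : ℝ) - 1) < ρ.toReal := by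
    have := Nat.ceil_lt_add_one (le_of_lt hρR)
    linarith
  have hj1ρ : ∀ i : ℕ, i < j → (i : ℝ≥0∞) ≤ ρ := by
    intro i hij
    rw [← ENNReal.ofReal_toReal hρtop, ← ENNReal.ofReal_natCast]
    refine ENNReal.ofReal_le_ofReal ?_
    have : (i : ℝ) ≤ (j : ℝ) - 1 := by
      have : (i : ℝ) + 1 ≤ (j : ℝ) := by exact_mod_cast hij
      linarith
    linarith
  refine le_trans hjρ (Nat.cast_le.mpr ?_)
  by_cases hall : ∀ v, gdist T w u v ≤ ρ
  · have : (Finset.univ.filter (fun x => gdist T w u x ≤ ρ)) = Finset.univ := by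
      ext x; simp [hall x]
    rw [this, Finset.card_univ]
    have hρn' : ρ.toReal ≤ (Fintype.card V : ℝ) := by
      rw [← ENNReal.toReal_natCast]
      exact ENNReal.toReal_mono (ENNReal.natCast_ne_top _) hρn
    have : ((j : ℝ) - 1) < (Fintype.card V : ℝ) := lt_of_lt_of_le hj1ρR hρn'
    have hjcR : (j : ℝ) < (Fintype.card V : ℝ) + 1 := by linarith
    have : j < Fintype.card V + 1 := by exact_mod_cast hjcR
    omega
  · push_neg at hall
    obtain ⟨v, hv⟩ := hall
    obtain ⟨p0⟩ := hconn.preconnected u v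
    set p := p0.bypass with hpdef
    have hp : p.IsPath := p0.bypass_isPath
    have hedges : ∀ e ∈ p.edges, w e ≤ 1 := fun e he => h1 e (p.edges_subset_edgeSet he)
    have hlen : ρ < (p.length : ℝ≥0∞) := by
      refine lt_of_lt_of_le hv ?_
      have := gdist_getVert_le_nat p hedges p.length
      rwa [p.getVert_length] at this
    have hjlen : j ≤ p.length := by
      rw [hjdef]
      refine Nat.ceil_le.mpr ?_
      have := ENNReal.toReal_mono (ENNReal.natCast_ne_top p.length) hlen.le
      simpa using this
    rw [← Finset.card_range j]
    refine Finset.card_le_card_of_injOn (fun i => p.getVert i) ?_ ?_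
    · intro i hi
      simp only [Finset.coe_range, Set.mem_Iio, Finset.mem_coe, Finset.mem_range] at hi
      simp only [Finset.mem_coe, Finset.mem_filter, Finset.mem_univ, true_and]
      exact le_trans (gdist_getVert_le_nat p hedges i) (hj1ρ i hi)
    · intro i hi i' hi' hii
      simp only [Finset.coe_range, Set.mem_Iio] at hi hi'
      exact getVert_injOn_of_isPath hp (le_trans (Nat.le_of_lt_succ (Nat.lt_succ_of_lt hi)) hjlen)
        (le_trans (Nat.le_of_lt_succ (Nat.lt_succ_of_lt hi')) hjlen) hii

/-- `π` assigns to each ordered vertex pair a shortest path: a walk whose total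
weight equals the shortest-path distance. -/
def IsShortestPathScheme {V : Type} (G : SimpleGraph V) (w : Sym2 V → ℝ≥0∞)
    (π : (s t : V) → G.Walk s t) : Prop :=
  ∀ s t : V, walkWeight G w (π s t) = gdist G w s t

/-- The edge weights are positive and finite on all edges of `G`. -/
def PosWeights {V : Type} (G : SimpleGraph V) (w : Sym2 V → ℝ≥0∞) : Prop :=
  ∀ e ∈ G.edgeSet, 0 < w e ∧ w e ≠ ⊤

/-- `H` is a `d`-lightweight initialization of `(G', w)` relative to a spanning tree `T`
(the MST of the subdivided graph), witnessed by the selection `S`: starting from `T`, for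
each vertex `v` the non-tree edges incident to `v` are added one by one in nondecreasing
order of weight for as long as the total weight added for `v` remains at most `d`. -/
def IsDLightweightInit {V : Type} [Fintype V] (G' T : SimpleGraph V) (w : Sym2 V → ℝ≥0∞)
    (d : ℝ) (H : SimpleGraph V) (S : V → Finset V) : Prop :=
  (∀ v : V, ∀ u ∈ S v, G'.Adj v u ∧ ¬ T.Adj v u) ∧
  (∀ v : V, ∑ u ∈ S v, w s(v, u) ≤ ENNReal.ofReal d) ∧
  (∀ v u : V, G'.Adj v u → ¬ T.Adj v u → u ∉ S v →
      (∀ x ∈ S v, w s(v, x) ≤ w s(v, u)) ∧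
      ENNReal.ofReal d < (∑ x ∈ S v, w s(v, x)) + w s(v, u)) ∧
  (∀ a b : V, H.Adj a b ↔ T.Adj a b ∨ (G'.Adj a b ∧ (b ∈ S a ∨ a ∈ S b)))

/-- `(G', w)` models the subdivided graph of the lightweight-spanner construction: it is
connected with positive finite edge weights, every edge has weight less than the number of
vertices (edges of weight ≥ n were removed and subdividing only adds vertices), and `T` is
a spanning tree of `G'` (the subdivided MST) all of whose edges have weight at most `1`. -/
def IsSubdividedSetting {V : Type} [Fintype V] (G' T : SimpleGraph V)
    (w : Sym2 V → ℝ≥0∞) : Prop :=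
  G'.Connected ∧ PosWeights G' w ∧
  (∀ e ∈ G'.edgeSet, w e < (Fintype.card V : ℝ≥0∞)) ∧
  T ≤ G' ∧ T.Connected ∧ T.IsAcyclic ∧
  (∀ e ∈ T.edgeSet, w e ≤ 1)

/-- Let `H` be a `d`-lightweight initialization of the subdivided graph
`G'`, let `π(s,t)` be the fixed shortest `s`–`t` path, let `z` be the total weight of the
edges of `π(s,t)` absent from `H`, and let `ε' ∈ (0,1]`. Then there is a set `N` of at least
`ε'·z/10` vertices, each at distance at most `ε'·W(s,t)` in `H` from some vertex of
`π(s,t)`. -/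
theorem lightweight_init_path_neighborhood
    (V : Type) [Fintype V] (G' T : SimpleGraph V) (w : Sym2 V → ℝ≥0∞)
    (hsetting : IsSubdividedSetting G' T w)
    (π : (s t : V) → G'.Walk s t) (hπ : IsShortestPathScheme G' w π)
    (d : ℝ) (hd : 0 ≤ d)
    (H : SimpleGraph V) (S : V → Finset V) (hinit : IsDLightweightInit G' T w d H S)
    (s t : V) (z : ℝ≥0∞)
    (hz : (((π s t).edges.filter (fun e => e ∉ H.edgeSet)).map w).sum = z)
    (ε' : ℝ) (hε'0 : 0 < ε') (hε'1 : ε' ≤ 1) :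
    ∃ N : Finset V, ENNReal.ofReal ε' * z / 10 ≤ (N.card : ℝ≥0∞) ∧
      ∀ x ∈ N, ∃ y ∈ (π s t).support,
        gdist H w x y ≤ ENNReal.ofReal ε' * maxEdge G' w (π s t) := by
  classical
  obtain ⟨hG'conn, hpos, hlt, hTG, hTconn, _hacyc, hT1⟩ := hsetting
  by_cases hz0 : z = 0
  · exact ⟨∅, by simp [hz0], by simp⟩
  set P : G'.Walk s t := π s t with hPdef
  set lw : List ℝ≥0∞ := P.edges.map w with hlwdef
  set W : ℝ≥0∞ := maxEdge G' w P with hWdef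
  have hWW : W = maxEdge' lw := rfl
  set ε : ℝ≥0∞ := ENNReal.ofReal ε' with hεdef
  have hε0 : 0 < ε := ENNReal.ofReal_pos.mpr hε'0
  have hε1 : ε ≤ 1 := ENNReal.ofReal_le_one.mpr hε'1
  have hcard0 : 0 < Fintype.card V := Fintype.card_pos_iff.mpr ⟨s⟩
  have hPedge : ∀ e ∈ P.edges, e ∈ G'.edgeSet := fun e he => P.edges_subset_edgeSet he
  have hlw_lt : ∀ x ∈ lw, x < (Fintype.card V : ℝ≥0∞) := by
    intro x hx
    rw [hlwdef] at hx
    obtain ⟨e, he, rfl⟩ := List.mem_map.mp hx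
    exact hlt e (hPedge e he)
  have hWcard : W < (Fintype.card V : ℝ≥0∞) := by
    rw [hWW]
    exact maxEdge'_lt (by exact_mod_cast hcard0) hlw_lt
  have hWtop : W ≠ ⊤ := (hWcard.trans (ENNReal.natCast_lt_top _)).ne
  have hzTot : z ≤ lw.sum := by
    rw [← hz]
    exact sum_map_filter_le w _ P.edges
  have hTot_top : lw.sum ≠ ⊤ :=
    list_sum_ne_top (fun x hx => ((hlw_lt x hx).trans (ENNReal.natCast_lt_top _)).ne)
  have hztop : z ≠ ⊤ := ne_top_of_le_ne_top hTot_top hzTot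
  have hW0 : 0 < W := by
    rcases hP : P.edges with _ | ⟨e, es⟩
    · exfalso; apply hz0; rw [← hz, hP]; simp
    · have he : e ∈ P.edges := by rw [hP]; exact List.mem_cons_self
      refine lt_of_lt_of_le (hpos _ (hPedge e he)).1 ?_
      rw [hWW]
      exact le_maxEdge' (List.mem_map_of_mem (f := w) he)
  set ρ : ℝ≥0∞ := ε * W / 4 with hρdef
  have hεWtop : ε * W ≠ ⊤ := ENNReal.mul_ne_top ENNReal.ofReal_ne_top hWtop
  have hρ_le_εW : ρ ≤ ε * W := by
    rw [hρdef, div_eq_mul_inv]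
    calc ε * W * 4⁻¹ ≤ ε * W * 1 := by
          gcongr
          exact ENNReal.inv_le_one.mpr (by norm_num)
      _ = ε * W := mul_one _
  have hρtop : ρ ≠ ⊤ := ne_top_of_le_ne_top hεWtop hρ_le_εW
  have hρ0 : 0 < ρ := by
    rw [hρdef]
    exact ENNReal.div_pos (mul_ne_zero hε0.ne' hW0.ne') (by norm_num)
  have hρW : ρ ≤ W := le_trans hρ_le_εW (mul_le_of_le_one_left zero_le hε1)
  have hρn : ρ ≤ (Fintype.card V : ℝ≥0∞) := le_trans hρW hWcard.le
  have hWr : 0 < W.toReal := ENNReal.toReal_pos hW0.ne' hWtop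
  have hρr : ρ.toReal = ε' * W.toReal / 4 := by
    rw [hρdef, ENNReal.toReal_div, ENNReal.toReal_mul, hεdef,
      ENNReal.toReal_ofReal hε'0.le]
    norm_num
  have hρρW : ρ + ρ < W := by
    refine (ENNReal.toReal_lt_toReal (ENNReal.add_ne_top.mpr ⟨hρtop, hρtop⟩) hWtop).mp ?_
    rw [ENNReal.toReal_add hρtop hρtop, hρr]
    nlinarith [hWr, hε'0, hε'1]
  set D : ℝ≥0∞ := W + W with hDdef
  have hD0 : D ≠ 0 := by
    rw [hDdef]
    simp [hW0.ne']
  have hDtop : D ≠ ⊤ := ENNReal.add_ne_top.mpr ⟨hWtop, hWtop⟩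
  -- m : the number of balls
  have hex : ∃ n : ℕ, lw.sum ≤ (n : ℝ≥0∞) * D := by
    obtain ⟨n, hn⟩ := ENNReal.exists_nat_gt
      (show lw.sum / D ≠ ⊤ from (ENNReal.div_lt_top hTot_top hD0).ne)
    exact ⟨n, (ENNReal.div_le_iff_le_mul (Or.inl hD0) (Or.inl hDtop)).mp hn.le⟩
  set m : ℕ := Nat.find hex with hmdef
  have hm : lw.sum ≤ (m : ℝ≥0∞) * D := Nat.find_spec hex
  have hmlt : ∀ k, k < m → (k : ℝ≥0∞) * D < lw.sum := by
    intro k hk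
    exact not_le.mp (Nat.find_min hex hk)
  -- greedy selection of indices along the walk
  have hexidx : ∀ k : ℕ, ∃ i : ℕ, ((k : ℝ≥0∞) * D ≤ (lw.take i).sum ∨ lw.length ≤ i) :=
    fun k => ⟨lw.length, Or.inr le_rfl⟩
  set idx : ℕ → ℕ := fun k => Nat.find (hexidx k) with hidxdef
  have hidx_le : ∀ k, idx k ≤ lw.length := fun k => Nat.find_le (Or.inr le_rfl)
  have ha_lo : ∀ k, k < m → (k : ℝ≥0∞) * D ≤ (lw.take (idx k)).sum := by
    intro k hk
    rcases Nat.find_spec (hexidx k) with h | h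
    · exact h
    · have hidxk : lw.take (idx k) = lw := List.take_of_length_le h
      rw [hidxk]
      exact (hmlt k hk).le
  have ha_hi : ∀ k, k < m → (lw.take (idx k)).sum ≤ (k : ℝ≥0∞) * D + W := by
    intro k hk
    rcases hik : idx k with _ | i
    · simp
    · have hmin := Nat.find_min (hexidx k) (show i < idx k by omega)
      push_neg at hmin
      obtain ⟨hlt', hilen⟩ := hmin
      rw [List.sum_take_succ lw i hilen]
      refine add_le_add hlt'.le ?_
      rw [hWW]
      exact le_maxEdge' (lw.getElem_mem hilen)
  -- the centers
  set u : ℕ → V := fun k => P.getVert (idx k) with hudef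
  have hTot_eq : lw.sum = gdist G' w s t := hπ s t
  have hg_hi : ∀ k, gdist G' w s (u k) ≤ (lw.take (idx k)).sum := by
    intro k
    exact gdist_getVert_le_prefix P (idx k)
  have hg_lo : ∀ k, (lw.take (idx k)).sum ≤ gdist G' w s (u k) := by
    intro k
    have hbfin : (lw.drop (idx k)).sum ≠ ⊤ := by
      refine ne_top_of_le_ne_top hTot_top ?_
      conv_rhs => rw [← List.take_append_drop (idx k) lw]
      rw [List.sum_append]
      exact le_add_self
    have hsplit : (lw.take (idx k)).sum + (lw.drop (idx k)).sum = lw.sum := by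
      rw [← List.sum_append, List.take_append_drop]
    have h1 : lw.sum ≤ gdist G' w s (u k) + (lw.drop (idx k)).sum := by
      rw [hTot_eq]
      refine le_trans (gdist_triangle s (u k) t) ?_
      exact add_le_add_right (gdist_getVert_le_suffix P (idx k)) _
    refine (ENNReal.add_le_add_iff_right hbfin).mp ?_
    rw [hsplit]
    exact h1
  -- the balls
  set ball : ℕ → Finset V := fun k => Finset.univ.filter (fun x => gdist T w (u k) x ≤ ρ)
    with hballdef
  have hTH : T ≤ H := by
    intro a b hab
    exact (hinit.2.2.2 a b).mpr (Or.inl hab)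
  have hball_dist : ∀ k, ∀ x ∈ ball k, gdist H w x (u k) ≤ ε * W := by
    intro k x hx
    have hx' : gdist T w (u k) x ≤ ρ := (Finset.mem_filter.mp hx).2
    calc gdist H w x (u k) ≤ gdist T w x (u k) := gdist_mono hTH _ _
      _ = gdist T w (u k) x := gdist_comm _ _
      _ ≤ ρ := hx'
      _ ≤ ε * W := hρ_le_εW
  -- disjointness
  have hkey : ∀ k k', k < k' → k' < m → ∀ x, x ∈ ball k → x ∈ ball k' → False := by
    intro k k' hkk' hk'm x hx hx'
    have hkm : k < m := lt_trans hkk' hk'm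
    have hxk : gdist T w (u k) x ≤ ρ := (Finset.mem_filter.mp hx).2
    have hxk' : gdist T w (u k') x ≤ ρ := (Finset.mem_filter.mp hx').2
    have e1 : gdist G' w (u k) x ≤ ρ := le_trans (gdist_mono hTG _ _) hxk
    have e2 : gdist G' w x (u k') ≤ ρ := by
      refine le_trans (gdist_mono hTG _ _) ?_
      rw [gdist_comm]
      exact hxk'
    have c1 : (k' : ℝ≥0∞) * D ≤ gdist G' w s x + ρ := by
      refine le_trans (ha_lo k' hk'm) (le_trans (hg_lo k') ?_)
      exact le_trans (gdist_triangle s x (u k')) (add_le_add_right e2 _)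
    have c2 : gdist G' w s x ≤ (k : ℝ≥0∞) * D + W + ρ := by
      refine le_trans (gdist_triangle s (u k) x) ?_
      exact add_le_add (le_trans (hg_hi k) (ha_hi k hkm)) e1
    have c3 : ((k : ℝ≥0∞) + 1) * D ≤ (k' : ℝ≥0∞) * D := by
      have : ((k : ℝ≥0∞) + 1) ≤ (k' : ℝ≥0∞) := by exact_mod_cast hkk'
      exact mul_le_mul_left this D
    have hkDtop : (k : ℝ≥0∞) * D ≠ ⊤ := ENNReal.mul_ne_top (ENNReal.natCast_ne_top k) hDtop
    have hchain : (k : ℝ≥0∞) * D + D ≤ (k : ℝ≥0∞) * D + (W + (ρ + ρ)) := by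
      calc (k : ℝ≥0∞) * D + D = ((k : ℝ≥0∞) + 1) * D := by ring
        _ ≤ (k' : ℝ≥0∞) * D := c3
        _ ≤ gdist G' w s x + ρ := c1
        _ ≤ (k : ℝ≥0∞) * D + W + ρ + ρ := by
            exact add_le_add_left c2 ρ
        _ = (k : ℝ≥0∞) * D + (W + (ρ + ρ)) := by ring
    have hDle : D ≤ W + (ρ + ρ) := (ENNReal.add_le_add_iff_left hkDtop).mp hchain
    have hWle : W ≤ ρ + ρ := by
      rw [hDdef] at hDle
      exact (ENNReal.add_le_add_iff_left hWtop).mp hDle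
    exact absurd (lt_of_le_of_lt hWle hρρW) (lt_irrefl _)
  have hdisj : ∀ k ∈ Finset.range m, ∀ k' ∈ Finset.range m, k ≠ k' →
      Disjoint (ball k) (ball k') := by
    intro k hk k' hk' hne
    rw [Finset.disjoint_left]
    intro x hx hx'
    rcases lt_or_gt_of_ne hne with h | h
    · exact hkey k k' h (Finset.mem_range.mp hk') x hx hx'
    · exact hkey k' k h (Finset.mem_range.mp hk) x hx' hx
  refine ⟨(Finset.range m).biUnion ball, ?_, ?_⟩
  · -- cardinality bound
    have hcard_eq : ((Finset.range m).biUnion ball).card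
        = ∑ k ∈ Finset.range m, (ball k).card := Finset.card_biUnion hdisj
    have hballρ : ∀ k ∈ Finset.range m, ρ ≤ ((ball k).card : ℝ≥0∞) :=
      fun k _ => ball_card_ge hTconn hT1 (u k) ρ hρ0 hρn
    have hsum : (m : ℝ≥0∞) * ρ ≤ (((Finset.range m).biUnion ball).card : ℝ≥0∞) := by
      rw [hcard_eq, Nat.cast_sum]
      calc (m : ℝ≥0∞) * ρ = ∑ _k ∈ Finset.range m, ρ := by
            rw [Finset.sum_const, Finset.card_range, nsmul_eq_mul]
        _ ≤ ∑ k ∈ Finset.range m, ((ball k).card : ℝ≥0∞) := Finset.sum_le_sum hballρ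
    have hmz : z / D ≤ (m : ℝ≥0∞) := ENNReal.div_le_of_le_mul (le_trans hzTot hm)
    have hmain : ε * z / 10 ≤ (z / D) * ρ := by
      have hLfin : ε * z / 10 ≠ ⊤ := by
        refine (ENNReal.div_lt_top ?_ (by norm_num)).ne
        exact ENNReal.mul_ne_top ENNReal.ofReal_ne_top hztop
      have hzDfin : z / D ≠ ⊤ := (ENNReal.div_lt_top hztop hD0).ne
      have hRfin : (z / D) * ρ ≠ ⊤ := ENNReal.mul_ne_top hzDfin hρtop
      refine (ENNReal.toReal_le_toReal hLfin hRfin).mp ?_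
      rw [ENNReal.toReal_div, ENNReal.toReal_mul, ENNReal.toReal_mul, ENNReal.toReal_div,
        hρr, hεdef, ENNReal.toReal_ofReal hε'0.le, hDdef, ENNReal.toReal_add hWtop hWtop]
      have h10 : ((10 : ℝ≥0∞)).toReal = 10 := by norm_num
      rw [h10]
      have hzr : 0 ≤ z.toReal := ENNReal.toReal_nonneg
      have heq : z.toReal / (W.toReal + W.toReal) * (ε' * W.toReal / 4)
          = ε' * z.toReal / 8 := by
        field_simp
        ring
      rw [heq]
      nlinarith [mul_nonneg hε'0.le hzr]
    calc ε * z / 10 ≤ (z / D) * ρ := hmain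
      _ ≤ (m : ℝ≥0∞) * ρ := mul_le_mul_left hmz ρ
      _ ≤ _ := hsum
  · -- membership
    intro x hx
    obtain ⟨k, hk, hxk⟩ := Finset.mem_biUnion.mp hx
    exact ⟨u k, getVert_mem_support P (idx k), hball_dist k x hxk⟩
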